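/- arXiv:1801.06387 — 4 statements merged into one kernel-verified Lean document; each statement's English description precedes it below -/
import Mathlib

section
/- The off-diagonal cofactor of A(m+1): for i ≠ j, the (i,j) minor of the (m+1)×(m+1) matrix with entries a_i δ_{ij} + a_0 satisfies (-1)^{i+j}·|A^{i,j}| = −π(m+1)/(a_i a_j), where π(m+1) = ∏_{k=0}^{m+1} a_k. -/
open Finset

theorem stmt_5 (m : ℕ) (a : Fin (m + 2) → ℝ) (ha : ∀ k, 0 < a k)
    (A : Matrix (Fin (m + 1)) (Fin (m + 1)) ℝ)
    (hA : ∀ i j, A i j = (if i = j then a i.succ else 0) + a 0)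
    (i j : Fin (m + 1)) (hij : i ≠ j) :
    (-1 : ℝ) ^ ((i : ℕ) + (j : ℕ)) * (A.submatrix i.succAbove j.succAbove).det =
      -((∏ k : Fin (m + 2), a k) / (a i.succ * a j.succ)) := by
  have h0 : ∀ k, a k ≠ 0 := fun k => (ha k).ne'
  have hadj : (-1 : ℝ) ^ ((i : ℕ) + (j : ℕ)) * (A.submatrix i.succAbove j.succAbove).det
      = Matrix.adjugate A j i := (Matrix.adjugate_fin_succ_eq_det_submatrix A j i).symm
  rw [hadj, Matrix.adjugate_apply]
  obtain ⟨B, hB⟩ : ∃ B : Matrix (Fin (m + 1)) (Fin (m + 1)) ℝ, B =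
    fun p q => if p = i then (if q = j then (1 : ℝ) else 0)
      else if p = j then a 0 else ((if p = q then a p.succ else 0) + a 0) := ⟨_, rfl⟩
  obtain ⟨C, hC⟩ : ∃ C : Matrix (Fin (m + 1)) (Fin (m + 1)) ℝ, C =
    fun p q => if p = i then (if q = j then (1 : ℝ) else 0)
      else if p = j then a 0 else (if p = q then a p.succ else 0) := ⟨_, rfl⟩
  obtain ⟨E, hE⟩ : ∃ E : Matrix (Fin (m + 1)) (Fin (m + 1)) ℝ, E =
    fun p q => if p = i then (if q = j then (1 : ℝ) else 0)
      else if p = j then (if q = i then a 0 else 0)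
      else (if p = q then a p.succ else 0) := ⟨_, rfl⟩
  have step1 : (A.updateRow i (Pi.single j 1)).det = B.det := by
    apply Matrix.det_eq_of_forall_row_eq_smul_add_const
      (fun p => if p = j then a j.succ else 0) i (by simp [hij])
    intro p q
    simp only [hB, Matrix.updateRow_apply, hA, Pi.single_apply]
    split_ifs <;> subst_vars <;> first | rfl | ring1 | simp_all
  have step2 : B.det = C.det := by
    apply Matrix.det_eq_of_forall_row_eq_smul_add_const
      (fun p => if p = i ∨ p = j then (0:ℝ) else 1) j (by simp)
    intro p q
    simp only [hB, hC]
    split_ifs <;> subst_vars <;> first | rfl | ring1 | simp_all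
  have step3 : C.det = E.det := by
    rw [← Matrix.det_transpose C, ← Matrix.det_transpose E]
    apply Matrix.det_eq_of_forall_row_eq_smul_add_const
      (fun q => if q = i then (0:ℝ) else 1) i (by simp)
    intro q p
    simp only [Matrix.transpose_apply]
    simp only [hC, hE]
    split_ifs <;> subst_vars <;> first | rfl | ring1 | simp_all
  obtain ⟨d, hd⟩ : ∃ d : Fin (m + 1) → ℝ, d =
    fun p => if p = i then 1 else if p = j then a 0 else a p.succ := ⟨_, rfl⟩
  have hEfac : E = Matrix.diagonal d * (Equiv.swap i j).permMatrix ℝ := by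
    ext p q
    rw [Matrix.mul_apply, Finset.sum_eq_single p]
    · rw [Matrix.diagonal_apply_eq]
      simp only [Equiv.Perm.permMatrix, PEquiv.toMatrix_apply, Equiv.toPEquiv_apply,
        Option.mem_def, Option.some.injEq, hE, hd]
      by_cases hpi : p = i
      · subst hpi
        simp [Equiv.swap_apply_left, eq_comm]
      by_cases hpj : p = j
      · subst hpj
        simp [hpi, Equiv.swap_apply_right, eq_comm]
      · rw [Equiv.swap_apply_of_ne_of_ne hpi hpj]
        simp [hpi, hpj, eq_comm]
    · intro r _ hrp
      rw [Matrix.diagonal_apply_ne' _ hrp, zero_mul]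
    · simp
  have step4 : E.det = -(a 0 * ∏ p ∈ (univ.erase i).erase j, a p.succ) := by
    rw [hEfac, Matrix.det_mul, Matrix.det_diagonal, Matrix.det_permutation,
      Equiv.Perm.sign_swap hij]
    have hprod : ∏ p, d p = a 0 * ∏ p ∈ (univ.erase i).erase j, a p.succ := by
      rw [← Finset.mul_prod_erase univ d (mem_univ i),
        ← Finset.mul_prod_erase _ d (Finset.mem_erase.mpr ⟨Ne.symm hij, mem_univ j⟩)]
      have h1 : d i = 1 := by simp [hd]
      have h2 : d j = a 0 := by simp [hd, Ne.symm hij]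
      rw [h1, h2, one_mul]
      congr 1
      refine Finset.prod_congr rfl fun p hp => ?_
      simp only [Finset.mem_erase] at hp
      simp [hd, hp.1, hp.2.1]
    rw [hprod]
    push_cast
    ring
  rw [step1, step2, step3, step4]
  have hsplit : (∏ k : Fin (m + 2), a k)
      = a 0 * (a i.succ * (a j.succ * ∏ p ∈ (univ.erase i).erase j, a p.succ)) := by
    rw [Fin.prod_univ_succ]
    congr 1
    rw [← Finset.mul_prod_erase univ (fun p => a p.succ) (mem_univ i),
      ← Finset.mul_prod_erase _ (fun p => a p.succ)
        (Finset.mem_erase.mpr ⟨Ne.symm hij, mem_univ j⟩)]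
  rw [hsplit]
  field_simp [(ha i.succ).ne', (ha j.succ).ne']
end

section
/- The matrix Σ with entries Σ_{ij} = (w_i²/‖w‖²)·(δ_{ij}(‖w‖² − w_i²) + (δ_{ij} − 1)w_j²) for i,j ∈ {1,...,n−1} is positive definite when all w_i are nonzero. -/
open Finset

set_option maxHeartbeats 1000000 in
theorem stmt_9 (m : ℕ) (w : Fin (m + 2) → ℝ) (hw : ∀ i, w i ≠ 0)
    (S : ℝ) (hS : S = ∑ k : Fin (m + 2), (w k) ^ 2)
    (Sig : Matrix (Fin (m + 1)) (Fin (m + 1)) ℝ)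
    (hSig : ∀ i j, Sig i j =
      (w i.castSucc) ^ 2 / S *
        ((if i = j then (1 : ℝ) else 0) * (S - (w i.castSucc) ^ 2) +
          ((if i = j then (1 : ℝ) else 0) - 1) * (w j.castSucc) ^ 2)) :
    Sig.PosDef := by
  set p : Fin (m + 1) → ℝ := fun i => (w i.castSucc) ^ 2 with hp
  have hppos : ∀ i, 0 < p i := fun i => by have := hw i.castSucc; positivity
  have hT : S = (∑ i : Fin (m + 1), p i) + (w (Fin.last (m + 1))) ^ 2 := by
    rw [hS, Fin.sum_univ_castSucc]
  have hTS : (∑ i : Fin (m + 1), p i) < S := by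
    rw [hT]
    have h0 : (0:ℝ) < (w (Fin.last (m + 1))) ^ 2 := by have := hw (Fin.last (m + 1)); positivity
    linarith
  have hSpos : 0 < S := lt_of_le_of_lt (Finset.sum_nonneg fun i _ => (hppos i).le) hTS
  have hSne : S ≠ 0 := ne_of_gt hSpos
  have hSig' : ∀ i j, Sig i j = (if i = j then p i else 0) - p i * p j / S := by
    intro i j
    rw [hSig]
    by_cases h : i = j
    · subst h; field_simp; simp only [hp, ↓reduceIte]; ring
    · simp [h]; ring
  rw [Matrix.posDef_iff_dotProduct_mulVec]
  constructor
  · show Sig.conjTranspose = Sig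
    ext i j
    simp only [Matrix.conjTranspose_apply, star_trivial, hSig']
    by_cases h : i = j
    · subst h; ring
    · simp [h, Ne.symm h]
      ring
  · intro x hx
    have key : dotProduct (star x) (Sig.mulVec x) =
        (∑ i, p i * x i ^ 2) - (∑ i, p i * x i) ^ 2 / S := by
      simp only [dotProduct, Matrix.mulVec, Pi.star_apply, star_trivial]
      have inner : ∀ i, (∑ j, Sig i j * x j) = p i * x i - p i * (∑ j, p j * x j) / S := by
        intro i
        simp only [hSig', sub_mul]
        rw [Finset.sum_sub_distrib]
        congr 1
        · simp [Finset.sum_ite_eq, ite_mul]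
        · rw [mul_div_assoc, Finset.sum_div, Finset.mul_sum]
          apply Finset.sum_congr rfl
          intro j _
          ring
      simp_rw [inner]
      have expand : ∀ i : Fin (m + 1),
          x i * (p i * x i - p i * (∑ j, p j * x j) / S) =
          p i * x i ^ 2 - (p i * x i) * (∑ j, p j * x j) / S := fun i => by ring
      simp_rw [expand]
      rw [Finset.sum_sub_distrib]
      congr 1
      rw [← Finset.sum_div, ← Finset.sum_mul, pow_two]
    rw [key]
    obtain ⟨i0, hi0⟩ := Function.ne_iff.mp hx
    have hA : 0 < ∑ i, p i * x i ^ 2 := by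
      apply Finset.sum_pos' (fun i _ => mul_nonneg (hppos i).le (sq_nonneg _))
      refine ⟨i0, Finset.mem_univ _, mul_pos (hppos i0) ?_⟩
      have : x i0 ≠ 0 := hi0
      positivity
    have hCS : (∑ i, p i * x i) ^ 2 ≤ (∑ i, p i) * (∑ i, p i * x i ^ 2) := by
      have h := Finset.sum_mul_sq_le_sq_mul_sq Finset.univ
        (fun i => w i.castSucc) (fun i => w i.castSucc * x i)
      calc (∑ i, p i * x i) ^ 2
          = (∑ i : Fin (m + 1), w i.castSucc * (w i.castSucc * x i)) ^ 2 := by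
            congr 1; apply Finset.sum_congr rfl; intro i _; simp only [hp]; ring
        _ ≤ (∑ i : Fin (m + 1), (w i.castSucc) ^ 2) *
              ∑ i : Fin (m + 1), (w i.castSucc * x i) ^ 2 := by simpa using h
        _ = (∑ i, p i) * (∑ i, p i * x i ^ 2) := by
            congr 1; apply Finset.sum_congr rfl; intro i _; simp only [hp]; ring
    have hmul : (∑ i, p i) * (∑ i, p i * x i ^ 2) < S * (∑ i, p i * x i ^ 2) :=
      mul_lt_mul_of_pos_right hTS hA
    have hlt : (∑ i, p i * x i) ^ 2 / S < ∑ i, p i * x i ^ 2 := by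
      rw [div_lt_iff₀ hSpos]
      calc (∑ i, p i * x i) ^ 2 ≤ (∑ i, p i) * (∑ i, p i * x i ^ 2) := hCS
        _ < S * (∑ i, p i * x i ^ 2) := hmul
        _ = (∑ i, p i * x i ^ 2) * S := mul_comm _ _
    linarith
end

section
/- Product-of-densities factorization: for nonzero reals w_1,...,w_n and c ∈ ℝ, the function (x_1,...,x_{n−1}) ↦ (∏_{i=1}^{n−1} φ(x_i; 0, w_i))·φ(c − ∑_{i=1}^{n−1}x_i; 0, w_n) equals φ(c; 0, ‖w‖) times the density of the (n−1)-dimensional Gaussian with mean vector μ_i = c w_i²/‖w‖² and covariance matrix Σ with entries Σ_{ij} = (w_i²/‖w‖²)(δ_{ij}(‖w‖²−w_i²) + (δ_{ij}−1)w_j²). -/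
open Finset Real

/-- Gaussian density with mean `μ` and variance `v`; `gpdf μ (σ^2) x = φ(x; μ, σ)`. -/
noncomputable def gpdf (μ v x : ℝ) : ℝ :=
  (Real.sqrt (2 * Real.pi * v))⁻¹ * Real.exp (-(x - μ) ^ 2 / (2 * v))

private lemma prod_sqrt' {ι} (s : Finset ι) (f : ι → ℝ) (h : ∀ i ∈ s, 0 ≤ f i) :
    ∏ i ∈ s, Real.sqrt (f i) = Real.sqrt (∏ i ∈ s, f i) := by
  induction s using Finset.cons_induction with
  | empty => simp
  | cons i s hi ih =>
    rw [Finset.prod_cons, Finset.prod_cons, ih (fun j hj => h j (Finset.mem_cons_of_mem hj)),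
      Real.sqrt_mul (h i (Finset.mem_cons_self i s))]

theorem stmt_15 (m : ℕ) (c : ℝ) (w : Fin (m + 2) → ℝ) (hw : ∀ i, w i ≠ 0)
    (S : ℝ) (hS : S = ∑ k : Fin (m + 2), (w k) ^ 2)
    (Sig : Matrix (Fin (m + 1)) (Fin (m + 1)) ℝ)
    (hSig : ∀ i j, Sig i j =
      (w i.castSucc) ^ 2 / S *
        ((if i = j then (1 : ℝ) else 0) * (S - (w i.castSucc) ^ 2) +
          ((if i = j then (1 : ℝ) else 0) - 1) * (w j.castSucc) ^ 2))
    (μ : Fin (m + 1) → ℝ) (hμ : ∀ i, μ i = c * (w i.castSucc) ^ 2 / S) :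
    ∀ x : Fin (m + 1) → ℝ,
      (∏ i : Fin (m + 1), gpdf 0 ((w i.castSucc) ^ 2) (x i)) *
          gpdf 0 ((w (Fin.last (m + 1))) ^ 2) (c - ∑ i : Fin (m + 1), x i) =
        gpdf 0 S c *
          ((Real.sqrt ((2 * Real.pi) ^ (m + 1) * Sig.det))⁻¹ *
            Real.exp (-(1 / 2) * dotProduct (x - μ) (Sig⁻¹.mulVec (x - μ)))) := by
  intro x
  set a : Fin (m + 1) → ℝ := fun i => (w i.castSucc) ^ 2 with ha
  set b : ℝ := (w (Fin.last (m + 1))) ^ 2 with hb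
  have hai : ∀ i, 0 < a i := fun i => pow_two_pos_of_ne_zero (hw _)
  have hbp : 0 < b := pow_two_pos_of_ne_zero (hw _)
  set sa : ℝ := ∑ i, a i with hsa
  have hsap : 0 < sa := Finset.sum_pos (fun i _ => hai i) ⟨0, Finset.mem_univ 0⟩
  have hS' : S = sa + b := by rw [hS, Fin.sum_univ_castSucc]
  have hSp : 0 < S := by rw [hS']; linarith
  have hSne : S ≠ 0 := hSp.ne'
  have hbne : b ≠ 0 := hbp.ne'
  have hane : ∀ i, a i ≠ 0 := fun i => (hai i).ne'
  -- determinant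
  have hSigEq : Sig = Matrix.diagonal a *
      (1 + Matrix.replicateCol Unit (fun _ => (1:ℝ)) * Matrix.replicateRow Unit (fun j => -(a j) / S)) := by
    ext i j
    rw [hSig, Matrix.diagonal_mul, Matrix.add_apply, Matrix.one_apply, Matrix.mul_apply]
    simp only [Matrix.replicateCol_apply, Matrix.replicateRow_apply, Finset.univ_unique, Finset.sum_singleton]
    by_cases h : i = j
    · subst h; simp only [if_pos rfl, if_true, ha]; field_simp; ring
    · simp only [if_neg h]; ring
  have hdet : Sig.det = (∏ i, a i) * (b / S) := by
    rw [hSigEq, Matrix.det_mul, Matrix.det_diagonal, Matrix.det_one_add_replicateCol_mul_replicateRow]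
    have h1 : dotProduct (fun j => -(a j) / S) (fun _ => (1:ℝ)) = -(sa / S) := by
      rw [dotProduct]
      rw [Finset.sum_congr rfl (fun j _ => show -(a j) / S * 1 = -(a j / S) by ring)]
      rw [Finset.sum_neg_distrib, ← Finset.sum_div]
    rw [h1]
    have h2 : 1 + -(sa / S) = b / S := by field_simp; linarith [hS']
    rw [h2]
  -- inverse
  set M : Matrix (Fin (m + 1)) (Fin (m + 1)) ℝ :=
    Matrix.of (fun i j => (if i = j then (a i)⁻¹ else 0) + b⁻¹) with hM
  have hSig' : ∀ i j, Sig i j = (if i = j then a i else 0) - a i * a j / S := by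
    intro i j
    rw [hSig]
    by_cases h : i = j
    · subst h; simp only [if_pos rfl, if_true, ha]; field_simp; ring
    · simp only [if_neg h]; ring
  have key : ∀ i k, (∑ j, Sig i j * M j k) = if i = k then (1:ℝ) else 0 := by
    intro i k
    have e1 : ∀ j, Sig i j * M j k =
        (if i = j then a i * M j k else 0) - a i / S * (a j * M j k) := by
      intro j
      rw [hSig']
      by_cases h : i = j
      · simp only [if_pos h]; ring
      · simp only [if_neg h]; ring
    rw [Finset.sum_congr rfl fun j _ => e1 j, Finset.sum_sub_distrib, Finset.sum_ite_eq,
      if_pos (Finset.mem_univ i), ← Finset.mul_sum]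
    have e2 : (∑ j, a j * M j k) = 1 + sa * b⁻¹ := by
      have e3 : ∀ j, a j * M j k = (if k = j then (1:ℝ) else 0) + a j * b⁻¹ := by
        intro j
        show a j * ((if j = k then (a j)⁻¹ else 0) + b⁻¹) = _
        by_cases h : j = k
        · subst h; rw [if_pos rfl, if_pos rfl, mul_add, mul_inv_cancel₀ (hane j)]
        · rw [if_neg h, if_neg (Ne.symm h)]; ring
      rw [Finset.sum_congr rfl fun j _ => e3 j, Finset.sum_add_distrib, Finset.sum_ite_eq,
        if_pos (Finset.mem_univ k), ← Finset.sum_mul, ← hsa]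
    rw [e2]
    show a i * ((if i = k then (a i)⁻¹ else 0) + b⁻¹) - _ = _
    have hsb : sa = S - b := by linarith [hS']
    have h4 : 1 + (S - b) * b⁻¹ = S * b⁻¹ := by field_simp; ring
    have h5 : a i / S * (S * b⁻¹) = a i * b⁻¹ := by field_simp
    by_cases h : i = k
    · rw [if_pos h, if_pos h, hsb, mul_add, mul_inv_cancel₀ (hane i), h4, h5]; ring
    · rw [if_neg h, if_neg h, hsb, h4, h5]; ring
  have hMul : Sig * M = 1 := by
    ext i k
    rw [Matrix.mul_apply, key, Matrix.one_apply]
  have hinv : Sig⁻¹ = M := Matrix.inv_eq_right_inv hMul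
  -- quadratic form
  have hmv : ∀ i, M.mulVec (x - μ) i
      = (x i - μ i) / a i + (∑ j, (x j - μ j)) * b⁻¹ := by
    intro i
    simp only [Matrix.mulVec, dotProduct, Pi.sub_apply]
    have e1 : ∀ j, M i j * (x j - μ j)
        = (if i = j then (x j - μ j) / a j else 0) + (x j - μ j) * b⁻¹ := by
      intro j
      show ((if i = j then (a i)⁻¹ else 0) + b⁻¹) * (x j - μ j) = _
      by_cases h : i = j
      · subst h; rw [if_pos rfl, if_pos rfl]; field_simp
      · rw [if_neg h, if_neg h]; ring
    rw [Finset.sum_congr rfl fun j _ => e1 j, Finset.sum_add_distrib, Finset.sum_ite_eq,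
      if_pos (Finset.mem_univ i), ← Finset.sum_mul]
  have hquad : dotProduct (x - μ) (M.mulVec (x - μ))
      = (∑ i, (x i - μ i) ^ 2 / a i) + (∑ i, (x i - μ i)) ^ 2 * b⁻¹ := by
    rw [dotProduct]
    have e1 : ∀ i, (x - μ) i * M.mulVec (x - μ) i
        = (x i - μ i) ^ 2 / a i + (x i - μ i) * ((∑ j, (x j - μ j)) * b⁻¹) := by
      intro i
      rw [hmv]
      simp only [Pi.sub_apply]
      ring
    rw [Finset.sum_congr rfl fun i _ => e1 i, Finset.sum_add_distrib, ← Finset.sum_mul]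
    ring
  -- sums involving μ
  set t : ℝ := ∑ i, x i with ht
  set A : ℝ := ∑ i, x i ^ 2 / a i with hA
  have hys : (∑ i, (x i - μ i)) = t - c * sa / S := by
    rw [Finset.sum_sub_distrib, ← ht]
    congr 1
    have h1 : ∀ i, μ i = c / S * a i := by intro i; rw [hμ]; ring
    rw [Finset.sum_congr rfl fun i _ => h1 i, ← Finset.mul_sum, ← hsa]
    ring
  have hys2 : (∑ i, (x i - μ i) ^ 2 / a i) = A - 2 * c * t / S + c ^ 2 * sa / S ^ 2 := by
    have e1 : ∀ i, (x i - μ i) ^ 2 / a i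
        = x i ^ 2 / a i - 2 * c / S * x i + c ^ 2 / S ^ 2 * a i := by
      intro i
      rw [hμ]
      have := hane i
      field_simp
      ring
    rw [Finset.sum_congr rfl fun i _ => e1 i, Finset.sum_add_distrib, Finset.sum_sub_distrib,
      ← Finset.mul_sum, ← Finset.mul_sum, ← hA, ← ht, ← hsa]
    ring
  -- assemble
  rw [hinv, hquad, hdet]
  simp only [gpdf, sub_zero]
  rw [Finset.prod_mul_distrib, ← Real.exp_sum]
  have combine : ∀ p q r s u v u' v' : ℝ, p * q = r * s → u + v = u' + v' →
      (p * Real.exp u) * (q * Real.exp v) = (r * Real.exp u') * (s * Real.exp v') := by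
    intro p q r s u v u' v' h1 h2
    rw [mul_mul_mul_comm, ← Real.exp_add, h1, h2, Real.exp_add, ← mul_mul_mul_comm]
  have normeq : (∏ i, (Real.sqrt (2 * Real.pi * a i))⁻¹) * (Real.sqrt (2 * Real.pi * b))⁻¹
      = (Real.sqrt (2 * Real.pi * S))⁻¹ *
        (Real.sqrt ((2 * Real.pi) ^ (m + 1) * ((∏ i, a i) * (b / S))))⁻¹ := by
    have h1 : (∏ i, (Real.sqrt (2 * Real.pi * a i))⁻¹)
        = (Real.sqrt (∏ i, (2 * Real.pi * a i)))⁻¹ := by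
      rw [← prod_sqrt' _ _ (fun i _ => by positivity), Finset.prod_inv_distrib]
    rw [h1, ← mul_inv, ← mul_inv, ← Real.sqrt_mul (by positivity),
      ← Real.sqrt_mul (by positivity)]
    congr 1
    rw [Finset.prod_mul_distrib, Finset.prod_const]
    simp only [Finset.card_univ, Fintype.card_fin]
    field_simp
  have expeq : (∑ i, -x i ^ 2 / (2 * a i)) + -(c - t) ^ 2 / (2 * b)
      = -c ^ 2 / (2 * S) + -(1 / 2) *
        ((∑ i, (x i - μ i) ^ 2 / a i) + (∑ i, (x i - μ i)) ^ 2 * b⁻¹) := by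
    rw [hys, hys2]
    have e1 : ∀ i, -x i ^ 2 / (2 * a i) = -(1 / 2) * (x i ^ 2 / a i) := by
      intro i; have := hane i; field_simp
    rw [Finset.sum_congr rfl fun i _ => e1 i, ← Finset.mul_sum, ← hA, hS']
    have hsbne : sa + b ≠ 0 := by rw [← hS']; exact hSne
    field_simp
    ring
  exact combine _ _ _ _ _ _ _ _ normeq expeq
end

section
/- Determinant of the conditional covariance: the matrix Σ with entries Σ_{ij} = (w_i²/‖w‖²)(δ_{ij}(‖w‖²−w_i²) + (δ_{ij}−1)w_j²), i,j ∈ {1,...,n−1}, has determinant (∏_{j=1}^n w_j²)/(∑_{i=1}^n w_i²). -/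
open Finset

theorem stmt_17 (m : ℕ) (w : Fin (m + 2) → ℝ) (hw : ∀ i, w i ≠ 0)
    (S : ℝ) (hS : S = ∑ k : Fin (m + 2), (w k) ^ 2)
    (Sig : Matrix (Fin (m + 1)) (Fin (m + 1)) ℝ)
    (hSig : ∀ i j, Sig i j =
      (w i.castSucc) ^ 2 / S *
        ((if i = j then (1 : ℝ) else 0) * (S - (w i.castSucc) ^ 2) +
          ((if i = j then (1 : ℝ) else 0) - 1) * (w j.castSucc) ^ 2)) :
    Sig.det = (∏ j : Fin (m + 2), (w j) ^ 2) / (∑ i : Fin (m + 2), (w i) ^ 2) := by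
  have hS0 : S ≠ 0 := by
    rw [hS]
    exact ne_of_gt (Finset.sum_pos (fun k _ => pow_two_pos_of_ne_zero (hw k)) Finset.univ_nonempty)
  set D := Matrix.diagonal (fun i : Fin (m+1) => (w i.castSucc) ^ 2) with hD
  set A := (1 : Matrix (Fin (m+1)) (Fin (m+1)) ℝ) +
      Matrix.replicateCol Unit (fun _ => (-1 : ℝ)) * Matrix.replicateRow Unit (fun j : Fin (m+1) => (w j.castSucc) ^ 2 / S) with hA
  have hfac : Sig = D * A := by
    ext i j
    simp only [hA, hD, hSig, Matrix.mul_apply, Matrix.add_apply, Matrix.one_apply,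
      Matrix.replicateCol_apply, Matrix.replicateRow_apply, Matrix.diagonal_apply, Finset.univ_unique,
      Finset.sum_singleton, mul_ite, mul_one, mul_zero, ite_mul, zero_mul]
    rw [Finset.sum_ite_eq Finset.univ i]
    by_cases h : i = j <;> simp [h] <;> field_simp <;> first | tauto | ring
  have hdetA : A.det = (w (Fin.last (m+1))) ^ 2 / S := by
    rw [hA, Matrix.det_one_add_replicateCol_mul_replicateRow]
    have : dotProduct (fun j : Fin (m+1) => (w j.castSucc) ^ 2 / S)
        (fun _ : Fin (m+1) => (-1 : ℝ)) = -∑ j : Fin (m+1), (w j.castSucc) ^ 2 / S := by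
      simp [dotProduct]
    rw [this, ← Finset.sum_div]
    have hsum : ∑ j : Fin (m+1), (w j.castSucc) ^ 2 = S - (w (Fin.last (m+1))) ^ 2 := by
      have h2 := Fin.sum_univ_castSucc (f := fun k : Fin (m+2) => w k ^ 2)
      rw [hS, h2]; ring
    rw [hsum]
    field_simp
    ring
  rw [hfac, Matrix.det_mul, Matrix.det_diagonal, hdetA, ← hS,
    Fin.prod_univ_castSucc (f := fun j => (w j) ^ 2)]
  ring
end
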